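/- Let a_1 > a_2 > a_3 be integers such that a_2 and a_3 have the same number of factors of 2 in their prime factorizations, let t_1, t_2, t_3 be nonnegative integers, and let S = K^{(a_1)}_{a_1+t_1} ∪ K^{(a_2)}_{a_2+t_2} ∪ K^{(a_3)}_{a_3+t_3} be a vertex disjoint union of cliques. Then any 2-coloring of ℤ with no monochromatic translate of any set in W'(S) is periodic with period 2a_1. -/

import Mathlib

/-- An automorphism of the hypercube `Q_d`: a bijection of the vertex set preserving
adjacency (symmetric difference of size one) in both directions. -/
def IsCubeAutomorphism {d : ℕ} (ψ : Finset (Fin d) → Finset (Fin d)) : Prop :=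
  Function.Bijective ψ ∧
    ∀ A B : Finset (Fin d), (symmDiff A B).card = 1 ↔ (symmDiff (ψ A) (ψ B)).card = 1

/-- `W_d(S) = {|A| : A ∈ S}`, the set of weights (as integers) of members of `S`. -/
def weightSet {d : ℕ} (S : Set (Finset (Fin d))) : Set ℤ :=
  {w | ∃ A ∈ S, (A.card : ℤ) = w}

/-- `W*(S) = {W_d(ψ(S)) : ψ an automorphism of Q_d}`. -/
def WStar {d : ℕ} (S : Set (Finset (Fin d))) : Set (Set ℤ) :=
  {W | ∃ ψ, IsCubeAutomorphism ψ ∧ W = weightSet (ψ '' S)}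

/-- `D` is a translate of `W`. -/
def IsTranslateOf (D W : Set ℤ) : Prop := ∃ j : ℤ, D = (fun x => x + j) '' W

/-- The translates of sets from `𝒲` whose smallest element is `0`. -/
def MinZeroTranslates (𝒲 : Set (Set ℤ)) : Set (Set ℤ) :=
  {D | (∃ W ∈ 𝒲, IsTranslateOf D W) ∧ 0 ∈ D ∧ ∀ x ∈ D, 0 ≤ x}

/-- `W'(S)`: translates of sets from `W*(S)` with smallest element `0` which are
minimal with respect to inclusion. -/
def WPrime {d : ℕ} (S : Set (Finset (Fin d))) : Set (Set ℤ) :=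
  {D | D ∈ MinZeroTranslates (WStar S) ∧
    ∀ D' ∈ MinZeroTranslates (WStar S), D' ⊆ D → D' = D}

/-- A family `𝒟` of sets of integers is `t`-translate-Ramsey: every `t`-coloring of `ℤ`
admits a monochromatic translate `D + j` of some `D ∈ 𝒟`. -/
def TranslateRamseySet (t : ℕ) (𝒟 : Set (Set ℤ)) : Prop :=
  ∀ c : ℤ → Fin t, ∃ D ∈ 𝒟, ∃ j : ℤ, ∀ x ∈ D, ∀ y ∈ D, c (x + j) = c (y + j)

/- ### Auxiliary lemmas -/

section Helpers

lemma fin2_cases : ∀ β γ x : Fin 2, β ≠ γ → x = β ∨ x = γ := by decide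

lemma fin2_resolve : ∀ β γ x : Fin 2, β ≠ γ → x ≠ β → x = γ := by decide

lemma fin2_eq_of_ne : ∀ a b x : Fin 2, x ≠ a → b ≠ a → x = b := by decide

lemma nae_out3 {x y z κ : Fin 2} (h : ¬(x = y ∧ y = z)) (hx : x = κ) (hy : y = κ) :
    z ≠ κ := fun hz => h ⟨hx.trans hy.symm, hy.trans hz.symm⟩

lemma nae_out2 {x y z κ : Fin 2} (h : ¬(x = y ∧ y = z)) (hx : x = κ) (hz : z = κ) :
    y ≠ κ := fun hy => h ⟨hx.trans hy.symm, hy.trans hz.symm⟩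

lemma nae_out1 {x y z κ : Fin 2} (h : ¬(x = y ∧ y = z)) (hy : y = κ) (hz : z = κ) :
    x ≠ κ := fun hx => h ⟨hx.trans hy.symm, hy.trans hz.symm⟩

lemma min3 (v1 v2 v3 : ℤ) :
    ∃ m ∈ ({v1, v2, v3} : Set ℤ), ∀ w ∈ ({v1, v2, v3} : Set ℤ), m ≤ w := by
  have h1 : v1 ∈ ({v1, v2, v3} : Set ℤ) := by simp
  have h2 : v2 ∈ ({v1, v2, v3} : Set ℤ) := by simp
  have h3 : v3 ∈ ({v1, v2, v3} : Set ℤ) := by simp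
  rcases le_total v1 v2 with a | a <;> rcases le_total v1 v3 with b | b <;>
    rcases le_total v2 v3 with e | e <;>
    [ exact ⟨v1, h1, by rintro w (rfl | rfl | rfl) <;> omega⟩;
      exact ⟨v1, h1, by rintro w (rfl | rfl | rfl) <;> omega⟩;
      exact ⟨v1, h1, by rintro w (rfl | rfl | rfl) <;> omega⟩;
      exact ⟨v3, h3, by rintro w (rfl | rfl | rfl) <;> omega⟩;
      exact ⟨v2, h2, by rintro w (rfl | rfl | rfl) <;> omega⟩;
      exact ⟨v3, h3, by rintro w (rfl | rfl | rfl) <;> omega⟩;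
      exact ⟨v2, h2, by rintro w (rfl | rfl | rfl) <;> omega⟩;
      exact ⟨v3, h3, by rintro w (rfl | rfl | rfl) <;> omega⟩ ]

/-- Every finite member of `MinZeroTranslates` contains a member of `WPrime`. -/
lemma exists_wprime_subset {d : ℕ} (S : Set (Finset (Fin d))) {D : Set ℤ}
    (hD : D ∈ MinZeroTranslates (WStar S)) (hfin : D.Finite) :
    ∃ D' ∈ WPrime S, D' ⊆ D := by
  classical
  set F : Set ℕ := {n | ∃ D', (D' ∈ MinZeroTranslates (WStar S) ∧ D' ⊆ D) ∧ D'.ncard = n}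
    with hF
  have hne : D.ncard ∈ F := ⟨D, ⟨hD, subset_rfl⟩, rfl⟩
  obtain ⟨D', ⟨hD'M, hD'sub⟩, hD'card⟩ := Nat.sInf_mem (s := F) ⟨_, hne⟩
  refine ⟨D', ⟨hD'M, ?_⟩, hD'sub⟩
  intro D3 h3 hsub
  have h3F : D3.ncard ∈ F := ⟨D3, ⟨h3, hsub.trans hD'sub⟩, rfl⟩
  have hle : sInf F ≤ D3.ncard := Nat.sInf_le h3F
  exact Set.eq_of_subset_of_ncard_le hsub (by omega) (hfin.subset hD'sub)

end Helpers

/- ### The eight "sign sets" give non-monochromatic triples -/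

lemma nae_of_coloring (d a1 a2 a3 t1 t2 t3 : ℕ)
    (K1 K2 K3 : Finset (Fin d))
    (hK1 : K1.card = a1 + t1) (hK2 : K2.card = a2 + t2) (hK3 : K3.card = a3 + t3)
    (hd12 : Disjoint K1 K2) (hd13 : Disjoint K1 K3) (hd23 : Disjoint K2 K3)
    (S : Set (Finset (Fin d)))
    (hS : S = ↑(K1.powersetCard a1) ∪ ↑(K2.powersetCard a2) ∪ ↑(K3.powersetCard a3))
    (c : ℤ → Fin 2)
    (hc : ¬ ∃ D ∈ WPrime S, ∃ j : ℤ, ∀ x ∈ D, ∀ y ∈ D, c (x + j) = c (y + j))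
    (y s1 s2 s3 : ℤ) (h1 : s1 = 1 ∨ s1 = -1) (h2 : s2 = 1 ∨ s2 = -1)
    (h3 : s3 = 1 ∨ s3 = -1) :
    ¬ (c (y + s1 * a1) = c (y + s2 * a2) ∧ c (y + s2 * a2) = c (y + s3 * a3)) := by
  classical
  intro hcon
  set T1 : Finset (Fin d) := if s1 = -1 then K1 else ∅ with hT1
  set T2 : Finset (Fin d) := if s2 = -1 then K2 else ∅ with hT2
  set T3 : Finset (Fin d) := if s3 = -1 then K3 else ∅ with hT3
  set X : Finset (Fin d) := T1 ∪ T2 ∪ T3 with hX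
  -- subset / disjointness facts
  have hsub1 : s1 = -1 → K1 ⊆ X := by
    intro h
    rw [hX, hT1, if_pos h]
    exact (Finset.subset_union_left).trans Finset.subset_union_left
  have hsub2 : s2 = -1 → K2 ⊆ X := by
    intro h
    rw [hX, hT2, if_pos h]
    exact (Finset.subset_union_right).trans Finset.subset_union_left
  have hsub3 : s3 = -1 → K3 ⊆ X := by
    intro h
    rw [hX, hT3, if_pos h]
    exact Finset.subset_union_right
  have hdisj1 : s1 = 1 → Disjoint K1 X := by
    intro h
    have h' : ¬ (s1 = -1) := by omega
    rw [hX, hT1, if_neg h']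
    refine Finset.disjoint_union_right.mpr ⟨Finset.disjoint_union_right.mpr
      ⟨Finset.disjoint_empty_right _, ?_⟩, ?_⟩
    · rw [hT2]; split <;> simp [hd12]
    · rw [hT3]; split <;> simp [hd13]
  have hdisj2 : s2 = 1 → Disjoint K2 X := by
    intro h
    have h' : ¬ (s2 = -1) := by omega
    rw [hX, hT2, if_neg h']
    refine Finset.disjoint_union_right.mpr ⟨Finset.disjoint_union_right.mpr
      ⟨?_, Finset.disjoint_empty_right _⟩, ?_⟩
    · rw [hT1]; split <;> simp [hd12.symm]
    · rw [hT3]; split <;> simp [hd23]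
  have hdisj3 : s3 = 1 → Disjoint K3 X := by
    intro h
    have h' : ¬ (s3 = -1) := by omega
    rw [hX, hT3, if_neg h']
    refine Finset.disjoint_union_right.mpr ⟨Finset.disjoint_union_right.mpr
      ⟨?_, ?_⟩, Finset.disjoint_empty_right _⟩
    · rw [hT1]; split <;> simp [hd13.symm]
    · rw [hT2]; split <;> simp [hd23.symm]
  -- the card computation
  have cardfact : ∀ (K : Finset (Fin d)) (a : ℕ) (s : ℤ), (s = 1 ∨ s = -1) →
      (s = 1 → Disjoint K X) → (s = -1 → K ⊆ X) →
      ∀ A0 : Finset (Fin d), A0 ⊆ K → A0.card = a →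
      ((symmDiff A0 X).card : ℤ) = X.card + s * a := by
    intro K a s hs hdis hsubX A0 hA0K hA0card
    rcases hs with rfl | rfl
    · have hd : Disjoint A0 X := (hdis rfl).mono_left hA0K
      have hEq : symmDiff A0 X = A0 ∪ X := by
        rw [symmDiff_def, Finset.sdiff_eq_self_of_disjoint hd,
          Finset.sdiff_eq_self_of_disjoint hd.symm, Finset.sup_eq_union]
      rw [hEq, Finset.card_union_of_disjoint hd, hA0card]
      push_cast; ring
    · have hAX : A0 ⊆ X := hA0K.trans (hsubX rfl)
      have hEq : symmDiff A0 X = X \ A0 := by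
        rw [symmDiff_def, Finset.sdiff_eq_empty_iff_subset.mpr hAX, Finset.sup_eq_union,
          Finset.empty_union]
      rw [hEq, Finset.card_sdiff_of_subset hAX, hA0card]
      have hle : a ≤ X.card := by
        rw [← hA0card]; exact Finset.card_le_card hAX
      push_cast [Nat.cast_sub hle]; ring
  -- the automorphism
  set ψ : Finset (Fin d) → Finset (Fin d) := fun A => symmDiff A X with hψ
  have hinv : Function.Involutive ψ := by
    intro A
    simp only [hψ]
    exact symmDiff_symmDiff_cancel_right X A
  have hkey : ∀ A B : Finset (Fin d), symmDiff (ψ A) (ψ B) = symmDiff A B := by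
    intro A B
    simp only [hψ]
    rw [symmDiff_symmDiff_symmDiff_comm, symmDiff_self, symmDiff_bot]
  have haut : IsCubeAutomorphism ψ := ⟨hinv.bijective, fun A B => by rw [hkey]⟩
  -- the weight set
  set v1 : ℤ := (X.card : ℤ) + s1 * a1 with hv1
  set v2 : ℤ := (X.card : ℤ) + s2 * a2 with hv2
  set v3 : ℤ := (X.card : ℤ) + s3 * a3 with hv3
  set W : Set ℤ := weightSet (ψ '' S) with hW
  have hmemS : ∀ A0 : Finset (Fin d), A0 ∈ S ↔
      (A0 ⊆ K1 ∧ A0.card = a1) ∨ (A0 ⊆ K2 ∧ A0.card = a2) ∨ (A0 ⊆ K3 ∧ A0.card = a3) := by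
    intro A0
    rw [hS]
    simp [Finset.mem_powersetCard, or_assoc]
  have hEW : W = {v1, v2, v3} := by
    ext w
    constructor
    · rintro ⟨Aim, ⟨A0, hA0S, rfl⟩, rfl⟩
      rcases (hmemS A0).mp hA0S with ⟨hs, hcard⟩ | ⟨hs, hcard⟩ | ⟨hs, hcard⟩
      · exact Or.inl (cardfact K1 a1 s1 h1 hdisj1 hsub1 A0 hs hcard)
      · exact Or.inr (Or.inl (cardfact K2 a2 s2 h2 hdisj2 hsub2 A0 hs hcard))
      · exact Or.inr (Or.inr (cardfact K3 a3 s3 h3 hdisj3 hsub3 A0 hs hcard))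
    · intro hw
      rcases hw with rfl | rfl | rfl
      · obtain ⟨A0, hA0sub, hA0card⟩ :=
          Finset.exists_subset_card_eq (show a1 ≤ K1.card by omega)
        exact ⟨ψ A0, ⟨A0, (hmemS A0).mpr (Or.inl ⟨hA0sub, hA0card⟩), rfl⟩,
          cardfact K1 a1 s1 h1 hdisj1 hsub1 A0 hA0sub hA0card⟩
      · obtain ⟨A0, hA0sub, hA0card⟩ :=
          Finset.exists_subset_card_eq (show a2 ≤ K2.card by omega)
        exact ⟨ψ A0, ⟨A0, (hmemS A0).mpr (Or.inr (Or.inl ⟨hA0sub, hA0card⟩)), rfl⟩,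
          cardfact K2 a2 s2 h2 hdisj2 hsub2 A0 hA0sub hA0card⟩
      · obtain ⟨A0, hA0sub, hA0card⟩ :=
          Finset.exists_subset_card_eq (show a3 ≤ K3.card by omega)
        exact ⟨ψ A0, ⟨A0, (hmemS A0).mpr (Or.inr (Or.inr ⟨hA0sub, hA0card⟩)), rfl⟩,
          cardfact K3 a3 s3 h3 hdisj3 hsub3 A0 hA0sub hA0card⟩
  obtain ⟨m, hmE, hmin⟩ := min3 v1 v2 v3
  set D : Set ℤ := (fun x => x + (-m)) '' W with hD
  have hDmin : D ∈ MinZeroTranslates (WStar S) := by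
    refine ⟨⟨W, ⟨ψ, haut, hW⟩, ⟨-m, rfl⟩⟩, ?_, ?_⟩
    · exact ⟨m, by rw [hEW]; exact hmE, by ring⟩
    · rintro x ⟨w, hw, rfl⟩
      have := hmin w (by rw [hEW] at hw; exact hw)
      show 0 ≤ w + -m
      omega
  have hDfin : D.Finite := by
    apply Set.Finite.image
    rw [hEW]
    exact (Set.finite_singleton v3).insert v2 |>.insert v1
  obtain ⟨D', hD'P, hD'sub⟩ := exists_wprime_subset S hDmin hDfin
  apply hc
  refine ⟨D', hD'P, y + m - (X.card : ℤ), ?_⟩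
  have hall : ∀ u ∈ D, c (u + (y + m - (X.card : ℤ))) = c (y + s1 * a1) := by
    rintro u ⟨w, hw, rfl⟩
    rw [hEW] at hw
    rcases hw with rfl | rfl | rfl
    · have e : v1 + (-m) + (y + m - (X.card : ℤ)) = y + s1 * a1 := by rw [hv1]; ring
      rw [e]
    · have e : v2 + (-m) + (y + m - (X.card : ℤ)) = y + s2 * a2 := by rw [hv2]; ring
      rw [e]; exact hcon.1.symm
    · have e : v3 + (-m) + (y + m - (X.card : ℤ)) = y + s3 * a3 := by rw [hv3]; ring
      rw [e]; exact (hcon.1.trans hcon.2).symm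
  intro u hu v hv
  rw [hall u (hD'sub hu), hall v (hD'sub hv)]

/- ### Pair structure at a "mixed" position -/

lemma pairs_of_N (c : ℤ → Fin 2) (A B C : ℤ)
    (N : ∀ y u v w : ℤ, (u = y + A ∨ u = y - A) → (v = y + B ∨ v = y - B) →
      (w = y + C ∨ w = y - C) → ¬(c u = c v ∧ c v = c w))
    (z : ℤ) (hmix : c (z + A) ≠ c (z - A)) :
    c (z + B) = c (z - B) ∧ c (z + C) = c (z - C) ∧ c (z + B) ≠ c (z + C) := by
  have n1 := N z (z+A) (z+B) (z+C) (Or.inl rfl) (Or.inl rfl) (Or.inl rfl)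
  have n2 := N z (z+A) (z+B) (z-C) (Or.inl rfl) (Or.inl rfl) (Or.inr rfl)
  have n3 := N z (z+A) (z-B) (z+C) (Or.inl rfl) (Or.inr rfl) (Or.inl rfl)
  have n4 := N z (z+A) (z-B) (z-C) (Or.inl rfl) (Or.inr rfl) (Or.inr rfl)
  have n5 := N z (z-A) (z+B) (z+C) (Or.inr rfl) (Or.inl rfl) (Or.inl rfl)
  have n6 := N z (z-A) (z+B) (z-C) (Or.inr rfl) (Or.inl rfl) (Or.inr rfl)
  have n7 := N z (z-A) (z-B) (z+C) (Or.inr rfl) (Or.inr rfl) (Or.inl rfl)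
  have n8 := N z (z-A) (z-B) (z-C) (Or.inr rfl) (Or.inr rfl) (Or.inr rfl)
  have key : ∀ (x1 x2 x3 x4 x5 x6 : Fin 2),
      (x1 ≠ x2 ∧ ¬(x1 = x3 ∧ x3 = x5) ∧ ¬(x1 = x3 ∧ x3 = x6) ∧ ¬(x1 = x4 ∧ x4 = x5) ∧
        ¬(x1 = x4 ∧ x4 = x6) ∧ ¬(x2 = x3 ∧ x3 = x5) ∧ ¬(x2 = x3 ∧ x3 = x6) ∧
        ¬(x2 = x4 ∧ x4 = x5) ∧ ¬(x2 = x4 ∧ x4 = x6)) → x3 = x4 ∧ x5 = x6 ∧ x3 ≠ x5 := by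
    decide
  exact key _ _ _ _ _ _ ⟨hmix, n1, n2, n3, n4, n5, n6, n7, n8⟩

/- ### The propagation steps -/

lemma ruleStepC (c : ℤ → Fin 2) (A B C : ℤ)
    (N : ∀ y u v w : ℤ, (u = y + A ∨ u = y - A) → (v = y + B ∨ v = y - B) →
      (w = y + C ∨ w = y - C) → ¬(c u = c v ∧ c v = c w))
    (z : ℤ) (hmix : c (z + A) ≠ c (z - A)) :
    c (z + 2*C + A) ≠ c (z + 2*C - A) := by
  obtain ⟨pB, pC, pBC⟩ := pairs_of_N c A B C N z hmix
  intro hmu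
  rcases fin2_cases (c (z+B)) (c (z+C)) (c (z+A)) pBC with hα | hα
  · -- c (z+A) = c (z+B) =: β ; c (z-A) = γ
    have hα' : c (z - A) = c (z+C) :=
      fin2_resolve _ _ _ pBC (fun h => hmix (hα.trans h.symm))
    have s1 : c (z+A-B+C) = c (z+C) := by
      have h := N (z+A-B) (z-B) (z+A) (z+A-B+C)
        (Or.inr (by ring)) (Or.inl (by ring)) (Or.inl (by ring))
      exact fin2_resolve _ _ _ pBC (nae_out3 h pB.symm hα)
    rcases fin2_cases (c (z+B)) (c (z+C)) (c (z + 2*C + A)) pBC with hμ | hμ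
    · -- μ = β
      have hmu2 : c (z + 2*C - A) = c (z+B) := hmu.symm.trans hμ
      have s2 : c (z-A-B+C) = c (z+B) := by
        have h := N (z-A+C) (z+C) (z-A-B+C) (z-A)
          (Or.inl (by ring)) (Or.inr (by ring)) (Or.inr (by ring))
        exact fin2_resolve _ _ _ (Ne.symm pBC) (nae_out2 h rfl hα')
      have s3 : c (z-B+2*C) = c (z+C) := by
        have h := N (z-A-B+2*C) (z-B+2*C) (z + 2*C - A) (z-A-B+C)
          (Or.inl (by ring)) (Or.inl (by ring)) (Or.inr (by ring))
        exact fin2_resolve _ _ _ pBC (nae_out1 h hmu2 s2)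
      have h := N (z-B+C) (z+A-B+C) (z+C) (z-B+2*C)
        (Or.inl (by ring)) (Or.inl (by ring)) (Or.inl (by ring))
      exact nae_out3 h s1 rfl s3
    · -- μ = γ
      have h := N (z+A+C) (z+C) (z+A-B+C) (z + 2*C + A)
        (Or.inr (by ring)) (Or.inr (by ring)) (Or.inl (by ring))
      exact nae_out3 h rfl s1 hμ
  · -- c (z+A) = c (z+C) =: γ ; c (z-A) = β
    have hα' : c (z - A) = c (z+B) :=
      fin2_resolve _ _ _ (Ne.symm pBC) (fun h => hmix (hα.trans h.symm))
    have s1 : c (z-A-B+C) = c (z+C) := by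
      have h := N (z-A-B) (z-B) (z-A) (z-A-B+C)
        (Or.inl (by ring)) (Or.inl (by ring)) (Or.inl (by ring))
      exact fin2_resolve _ _ _ pBC (nae_out3 h pB.symm hα')
    rcases fin2_cases (c (z+B)) (c (z+C)) (c (z + 2*C + A)) pBC with hμ | hμ
    · -- μ = β
      have s2 : c (z-B+2*C) = c (z+B) := by
        have h := N (z-B+C) (z-A-B+C) (z+C) (z-B+2*C)
          (Or.inr (by ring)) (Or.inl (by ring)) (Or.inl (by ring))
        exact fin2_resolve _ _ _ (Ne.symm pBC) (nae_out3 h s1 rfl)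
      have s3 : c (z+A-B+C) = c (z+B) := by
        have h := N (z+A+C) (z+C) (z+A-B+C) (z+A)
          (Or.inr (by ring)) (Or.inr (by ring)) (Or.inr (by ring))
        exact fin2_resolve _ _ _ (Ne.symm pBC) (nae_out2 h rfl hα)
      have h := N (z+A-B+2*C) (z-B+2*C) (z + 2*C + A) (z+A-B+C)
        (Or.inr (by ring)) (Or.inl (by ring)) (Or.inr (by ring))
      exact nae_out3 h s2 hμ s3
    · -- μ = γ
      have hmu2 : c (z + 2*C - A) = c (z+C) := hmu.symm.trans hμ
      have h := N (z-A+C) (z+C) (z-A-B+C) (z + 2*C - A)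
        (Or.inl (by ring)) (Or.inr (by ring)) (Or.inl (by ring))
      exact nae_out3 h rfl s1 hmu2

lemma ruleStepB (c : ℤ → Fin 2) (A B C : ℤ)
    (N : ∀ y u v w : ℤ, (u = y + A ∨ u = y - A) → (v = y + B ∨ v = y - B) →
      (w = y + C ∨ w = y - C) → ¬(c u = c v ∧ c v = c w))
    (z : ℤ) (hmix : c (z + A) ≠ c (z - A)) :
    c (z + 2*B + A) ≠ c (z + 2*B - A) := by
  obtain ⟨pB, pC, pBC⟩ := pairs_of_N c A B C N z hmix
  intro hmu
  rcases fin2_cases (c (z+B)) (c (z+C)) (c (z+A)) pBC with hα | hα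
  · -- c (z+A) = β ; c (z-A) = γ
    have hα' : c (z - A) = c (z+C) :=
      fin2_resolve _ _ _ pBC (fun h => hmix (hα.trans h.symm))
    rcases fin2_cases (c (z+B)) (c (z+C)) (c (z + 2*B + A)) pBC with hμ | hμ
    · -- μ = β
      have hmu2 : c (z + 2*B - A) = c (z+B) := hmu.symm.trans hμ
      have s1 : c (z-A+B+C) = c (z+B) := by
        have h := N (z-A+C) (z+C) (z-A+B+C) (z-A)
          (Or.inl (by ring)) (Or.inl (by ring)) (Or.inr (by ring))
        exact fin2_resolve _ _ _ (Ne.symm pBC) (nae_out2 h rfl hα')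
      have h := N (z-A+B) (z+B) (z + 2*B - A) (z-A+B+C)
        (Or.inl (by ring)) (Or.inl (by ring)) (Or.inl (by ring))
      exact nae_out3 h rfl hmu2 s1
    · -- μ = γ
      have s1 : c (z-A+B-C) = c (z+B) := by
        have h := N (z-A-C) (z-C) (z-A+B-C) (z-A)
          (Or.inl (by ring)) (Or.inl (by ring)) (Or.inl (by ring))
        exact fin2_resolve _ _ _ (Ne.symm pBC) (nae_out2 h pC.symm hα')
      have s2 : c (z+2*B-C) = c (z+C) := by
        have h := N (z+B-C) (z-A+B-C) (z+2*B-C) (z+B)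
          (Or.inr (by ring)) (Or.inl (by ring)) (Or.inl (by ring))
        exact fin2_resolve _ _ _ pBC (nae_out2 h s1 rfl)
      have s3 : c (z+A+B-C) = c (z+C) := by
        have h := N (z+A+B) (z+B) (z+A) (z+A+B-C)
          (Or.inr (by ring)) (Or.inr (by ring)) (Or.inr (by ring))
        exact fin2_resolve _ _ _ pBC (nae_out3 h rfl hα)
      have h := N (z+A+2*B-C) (z+2*B-C) (z+A+B-C) (z + 2*B + A)
        (Or.inr (by ring)) (Or.inr (by ring)) (Or.inl (by ring))
      exact nae_out3 h s2 s3 hμ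
  · -- c (z+A) = γ ; c (z-A) = β
    have hα' : c (z - A) = c (z+B) :=
      fin2_resolve _ _ _ (Ne.symm pBC) (fun h => hmix (hα.trans h.symm))
    rcases fin2_cases (c (z+B)) (c (z+C)) (c (z + 2*B + A)) pBC with hμ | hμ
    · -- μ = β
      have s1 : c (z+A+B+C) = c (z+B) := by
        have h := N (z+A+C) (z+C) (z+A+B+C) (z+A)
          (Or.inr (by ring)) (Or.inl (by ring)) (Or.inr (by ring))
        exact fin2_resolve _ _ _ (Ne.symm pBC) (nae_out2 h rfl hα)
      have h := N (z+A+B) (z+B) (z + 2*B + A) (z+A+B+C)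
        (Or.inr (by ring)) (Or.inl (by ring)) (Or.inl (by ring))
      exact nae_out3 h rfl hμ s1
    · -- μ = γ
      have hmu2 : c (z + 2*B - A) = c (z+C) := hmu.symm.trans hμ
      have s1 : c (z+A+B-C) = c (z+B) := by
        have h := N (z+A-C) (z-C) (z+A+B-C) (z+A)
          (Or.inr (by ring)) (Or.inl (by ring)) (Or.inl (by ring))
        exact fin2_resolve _ _ _ (Ne.symm pBC) (nae_out2 h pC.symm hα)
      have s2 : c (z-A+B-C) = c (z+C) := by
        have h := N (z-A+B) (z+B) (z-A) (z-A+B-C)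
          (Or.inl (by ring)) (Or.inr (by ring)) (Or.inr (by ring))
        exact fin2_resolve _ _ _ pBC (nae_out3 h rfl hα')
      have s3 : c (z+2*B-C) = c (z+B) := by
        have h := N (z-A+2*B-C) (z+2*B-C) (z-A+B-C) (z + 2*B - A)
          (Or.inl (by ring)) (Or.inr (by ring)) (Or.inl (by ring))
        exact fin2_resolve _ _ _ (Ne.symm pBC) (nae_out1 h s2 hmu2)
      have h := N (z+B-C) (z+A+B-C) (z+2*B-C) (z+B)
        (Or.inl (by ring)) (Or.inl (by ring)) (Or.inl (by ring))
      exact nae_out3 h s1 s3 rfl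

lemma N_reflect (c : ℤ → Fin 2) (A B C : ℤ)
    (N : ∀ y u v w : ℤ, (u = y + A ∨ u = y - A) → (v = y + B ∨ v = y - B) →
      (w = y + C ∨ w = y - C) → ¬(c u = c v ∧ c v = c w)) :
    ∀ y u v w : ℤ, (u = y + A ∨ u = y - A) → (v = y + B ∨ v = y - B) →
      (w = y + C ∨ w = y - C) →
      ¬((fun t => c (-t)) u = (fun t => c (-t)) v ∧
        (fun t => c (-t)) v = (fun t => c (-t)) w) := by
  intro y u v w hu hv hw
  exact N (-y) (-u) (-v) (-w)
    (hu.elim (fun h => Or.inr (by rw [h]; ring)) (fun h => Or.inl (by rw [h]; ring)))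
    (hv.elim (fun h => Or.inr (by rw [h]; ring)) (fun h => Or.inl (by rw [h]; ring)))
    (hw.elim (fun h => Or.inr (by rw [h]; ring)) (fun h => Or.inl (by rw [h]; ring)))

lemma ruleStepC_neg (c : ℤ → Fin 2) (A B C : ℤ)
    (N : ∀ y u v w : ℤ, (u = y + A ∨ u = y - A) → (v = y + B ∨ v = y - B) →
      (w = y + C ∨ w = y - C) → ¬(c u = c v ∧ c v = c w))
    (z : ℤ) (hmix : c (z + A) ≠ c (z - A)) :
    c (z - 2*C + A) ≠ c (z - 2*C - A) := by
  have hmix' : (fun t => c (-t)) ((-z) + A) ≠ (fun t => c (-t)) ((-z) - A) := by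
    show c (-(-z + A)) ≠ c (-(-z - A))
    rw [show -(-z + A) = z - A by ring, show -(-z - A) = z + A by ring]
    exact hmix.symm
  have h := ruleStepC (fun t => c (-t)) A B C (N_reflect c A B C N) (-z) hmix'
  have h2 : c (-(-z + 2*C + A)) ≠ c (-(-z + 2*C - A)) := h
  rw [show -(-z + 2*C + A) = z - 2*C - A by ring,
    show -(-z + 2*C - A) = z - 2*C + A by ring] at h2
  exact h2.symm

lemma ruleStepB_neg (c : ℤ → Fin 2) (A B C : ℤ)
    (N : ∀ y u v w : ℤ, (u = y + A ∨ u = y - A) → (v = y + B ∨ v = y - B) →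
      (w = y + C ∨ w = y - C) → ¬(c u = c v ∧ c v = c w))
    (z : ℤ) (hmix : c (z + A) ≠ c (z - A)) :
    c (z - 2*B + A) ≠ c (z - 2*B - A) := by
  have hmix' : (fun t => c (-t)) ((-z) + A) ≠ (fun t => c (-t)) ((-z) - A) := by
    show c (-(-z + A)) ≠ c (-(-z - A))
    rw [show -(-z + A) = z - A by ring, show -(-z - A) = z + A by ring]
    exact hmix.symm
  have h := ruleStepB (fun t => c (-t)) A B C (N_reflect c A B C N) (-z) hmix'
  have h2 : c (-(-z + 2*B + A)) ≠ c (-(-z + 2*B - A)) := h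
  rw [show -(-z + 2*B + A) = z - 2*B - A by ring,
    show -(-z + 2*B - A) = z - 2*B + A by ring] at h2
  exact h2.symm

theorem three_cliques_periodic_two_a1 (d a1 a2 a3 t1 t2 t3 : ℕ)
    (hgt1 : a2 < a1) (hgt2 : a3 < a2)
    (hval : ∃ p q r : ℕ, Odd p ∧ Odd q ∧ a2 = p * 2 ^ r ∧ a3 = q * 2 ^ r)
    (K1 K2 K3 : Finset (Fin d))
    (hK1 : K1.card = a1 + t1) (hK2 : K2.card = a2 + t2) (hK3 : K3.card = a3 + t3)
    (hd12 : Disjoint K1 K2) (hd13 : Disjoint K1 K3) (hd23 : Disjoint K2 K3)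
    (S : Set (Finset (Fin d)))
    (hS : S = ↑(K1.powersetCard a1) ∪ ↑(K2.powersetCard a2) ∪ ↑(K3.powersetCard a3))
    (c : ℤ → Fin 2)
    (hc : ¬ ∃ D ∈ WPrime S, ∃ j : ℤ, ∀ x ∈ D, ∀ y ∈ D, c (x + j) = c (y + j)) :
    ∀ x : ℤ, c (x + 2 * (a1 : ℤ)) = c x := by
  obtain ⟨p, q, r, hp, hq, hpB, hqC⟩ := hval
  have hNAE := nae_of_coloring d a1 a2 a3 t1 t2 t3 K1 K2 K3 hK1 hK2 hK3
    hd12 hd13 hd23 S hS c hc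
  set A : ℤ := (a1 : ℤ) with hA
  set B : ℤ := (a2 : ℤ) with hB
  set C : ℤ := (a3 : ℤ) with hC
  have N : ∀ y u v w : ℤ, (u = y + A ∨ u = y - A) → (v = y + B ∨ v = y - B) →
      (w = y + C ∨ w = y - C) → ¬(c u = c v ∧ c v = c w) := by
    intro y u v w hu hv hw
    rcases hu with rfl | rfl <;> rcases hv with rfl | rfl <;> rcases hw with rfl | rfl
    · have t := hNAE y 1 1 1 (Or.inl rfl) (Or.inl rfl) (Or.inl rfl)
      rw [show y + 1*(a1:ℤ) = y + A by rw [hA]; ring, show y + 1*(a2:ℤ) = y + B by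
        rw [hB]; ring, show y + 1*(a3:ℤ) = y + C by rw [hC]; ring] at t
      exact t
    · have t := hNAE y 1 1 (-1) (Or.inl rfl) (Or.inl rfl) (Or.inr rfl)
      rw [show y + 1*(a1:ℤ) = y + A by rw [hA]; ring, show y + 1*(a2:ℤ) = y + B by
        rw [hB]; ring, show y + (-1)*(a3:ℤ) = y - C by rw [hC]; ring] at t
      exact t
    · have t := hNAE y 1 (-1) 1 (Or.inl rfl) (Or.inr rfl) (Or.inl rfl)
      rw [show y + 1*(a1:ℤ) = y + A by rw [hA]; ring, show y + (-1)*(a2:ℤ) = y - B by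
        rw [hB]; ring, show y + 1*(a3:ℤ) = y + C by rw [hC]; ring] at t
      exact t
    · have t := hNAE y 1 (-1) (-1) (Or.inl rfl) (Or.inr rfl) (Or.inr rfl)
      rw [show y + 1*(a1:ℤ) = y + A by rw [hA]; ring, show y + (-1)*(a2:ℤ) = y - B by
        rw [hB]; ring, show y + (-1)*(a3:ℤ) = y - C by rw [hC]; ring] at t
      exact t
    · have t := hNAE y (-1) 1 1 (Or.inr rfl) (Or.inl rfl) (Or.inl rfl)
      rw [show y + (-1)*(a1:ℤ) = y - A by rw [hA]; ring, show y + 1*(a2:ℤ) = y + B by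
        rw [hB]; ring, show y + 1*(a3:ℤ) = y + C by rw [hC]; ring] at t
      exact t
    · have t := hNAE y (-1) 1 (-1) (Or.inr rfl) (Or.inl rfl) (Or.inr rfl)
      rw [show y + (-1)*(a1:ℤ) = y - A by rw [hA]; ring, show y + 1*(a2:ℤ) = y + B by
        rw [hB]; ring, show y + (-1)*(a3:ℤ) = y - C by rw [hC]; ring] at t
      exact t
    · have t := hNAE y (-1) (-1) 1 (Or.inr rfl) (Or.inr rfl) (Or.inl rfl)
      rw [show y + (-1)*(a1:ℤ) = y - A by rw [hA]; ring, show y + (-1)*(a2:ℤ) = y - B by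
        rw [hB]; ring, show y + 1*(a3:ℤ) = y + C by rw [hC]; ring] at t
      exact t
    · have t := hNAE y (-1) (-1) (-1) (Or.inr rfl) (Or.inr rfl) (Or.inr rfl)
      rw [show y + (-1)*(a1:ℤ) = y - A by rw [hA]; ring, show y + (-1)*(a2:ℤ) = y - B by
        rw [hB]; ring, show y + (-1)*(a3:ℤ) = y - C by rw [hC]; ring] at t
      exact t
  have key : ∀ z : ℤ, c (z + A) = c (z - A) := by
    by_contra hk
    push_neg at hk
    obtain ⟨z, hz⟩ := hk
    obtain ⟨pB, pC, pBC⟩ := pairs_of_N c A B C N z hz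
    set R : ℤ → Prop := fun w => c (w + A) ≠ c (w - A) ∧ c (w + B) = c (z + B) with hR
    have hstep : ∀ w : ℤ, R w → R (w + 2*B) ∧ R (w - 2*B) ∧ R (w + 2*C) ∧ R (w - 2*C) := by
      intro w hw
      simp only [hR] at hw ⊢
      obtain ⟨hwm, hwc⟩ := hw
      obtain ⟨pwB, pwC, pwBC⟩ := pairs_of_N c A B C N w hwm
      refine ⟨⟨ruleStepB c A B C N w hwm, ?_⟩, ⟨ruleStepB_neg c A B C N w hwm, ?_⟩,
        ⟨ruleStepC c A B C N w hwm, ?_⟩, ⟨ruleStepC_neg c A B C N w hwm, ?_⟩⟩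
      · obtain ⟨qB, qC, qBC⟩ := pairs_of_N c A B C N (w + 2*B) (ruleStepB c A B C N w hwm)
        rw [show w + 2*B - B = w + B by ring] at qB
        exact qB.trans hwc
      · rw [show w - 2*B + B = w - B by ring]
        exact pwB.symm.trans hwc
      · obtain ⟨qB, qC, qBC⟩ := pairs_of_N c A B C N (w + 2*C) (ruleStepC c A B C N w hwm)
        rw [show w + 2*C - C = w + C by ring] at qC
        rw [qC] at qBC
        exact (fin2_eq_of_ne (c (w + C)) (c (w + B)) _ qBC pwBC).trans hwc
      · obtain ⟨qB, qC, qBC⟩ := pairs_of_N c A B C N (w - 2*C) (ruleStepC_neg c A B C N w hwm)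
        rw [show w - 2*C + C = w - C by ring, ← pwC] at qBC
        exact (fin2_eq_of_ne (c (w + C)) (c (w + B)) _ qBC pwBC).trans hwc
    have latB : ∀ m : ℤ, ∀ w : ℤ, R w → R (w + 2*B*m) := by
      intro m
      induction m using Int.induction_on with
      | zero => intro w hw; rw [show w + 2*B*(0:ℤ) = w by ring]; exact hw
      | succ n ih =>
        intro w hw
        have h := (hstep _ (ih w hw)).1
        rw [show w + 2*B*((n:ℤ)+1) = w + 2*B*(n:ℤ) + 2*B by ring]
        exact h
      | pred n ih =>
        intro w hw
        have h := (hstep _ (ih w hw)).2.1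
        rw [show w + 2*B*(-(n:ℤ)-1) = w + 2*B*(-(n:ℤ)) - 2*B by ring]
        exact h
    have latC : ∀ m : ℤ, ∀ w : ℤ, R w → R (w + 2*C*m) := by
      intro m
      induction m using Int.induction_on with
      | zero => intro w hw; rw [show w + 2*C*(0:ℤ) = w by ring]; exact hw
      | succ n ih =>
        intro w hw
        have h := (hstep _ (ih w hw)).2.2.1
        rw [show w + 2*C*((n:ℤ)+1) = w + 2*C*(n:ℤ) + 2*C by ring]
        exact h
      | pred n ih =>
        intro w hw
        have h := (hstep _ (ih w hw)).2.2.2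
        rw [show w + 2*C*(-(n:ℤ)-1) = w + 2*C*(-(n:ℤ)) - 2*C by ring]
        exact h
    -- number theory: 2 * gcd(a2,a3) divides a2 - a3
    set G := Nat.gcd p q with hGdef
    have hgG : Nat.gcd a2 a3 = G * 2^r := by rw [hpB, hqC, Nat.gcd_mul_right]
    have hpG : p = G * (p / G) := (Nat.mul_div_cancel' (Nat.gcd_dvd_left p q)).symm
    have hqG : q = G * (q / G) := (Nat.mul_div_cancel' (Nat.gcd_dvd_right p q)).symm
    obtain ⟨-, hop⟩ := Nat.odd_mul.mp (hpG ▸ hp)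
    obtain ⟨-, hoq⟩ := Nat.odd_mul.mp (hqG ▸ hq)
    have hev : Even (((p / G : ℕ) : ℤ) - ((q / G : ℕ) : ℤ)) :=
      Odd.sub_odd (by exact_mod_cast hop) (by exact_mod_cast hoq)
    obtain ⟨h', hh'⟩ := hev
    have hpq : (p : ℤ) - (q : ℤ) = 2 * (G : ℤ) * h' := by
      have e1 : (p : ℤ) = (G : ℤ) * ((p / G : ℕ) : ℤ) := by exact_mod_cast hpG
      have e2 : (q : ℤ) = (G : ℤ) * ((q / G : ℕ) : ℤ) := by exact_mod_cast hqG
      rw [e1, e2]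
      linear_combination (G : ℤ) * hh'
    have hB' : B = (p : ℤ) * 2^r := by rw [hB]; exact_mod_cast hpB
    have hC' : C = (q : ℤ) * 2^r := by rw [hC]; exact_mod_cast hqC
    set X0 := Int.gcdA (a2 : ℤ) (a3 : ℤ) with hX0
    set Y0 := Int.gcdB (a2 : ℤ) (a3 : ℤ) with hY0
    have hbez : ((Int.gcd (a2 : ℤ) (a3 : ℤ) : ℕ) : ℤ) = (a2 : ℤ) * X0 + (a3 : ℤ) * Y0 :=
      Int.gcd_eq_gcd_ab _ _
    have hgnat : ((Int.gcd (a2 : ℤ) (a3 : ℤ) : ℕ) : ℤ) = (G : ℤ) * 2^r := by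
      rw [Int.gcd_natCast_natCast]
      exact_mod_cast hgG
    have key2 : B - C = 2 * h' * ((G : ℤ) * 2^r) := by
      rw [hB', hC']
      linear_combination ((2:ℤ)^r) * hpq
    have hsum : 2*B*(-h' * X0) + 2*C*(-h' * Y0) = C - B := by
      have e5 : (a2 : ℤ) = B := hB.symm
      have e6 : (a3 : ℤ) = C := hC.symm
      rw [e5, e6] at hbez
      rw [hgnat] at hbez
      linear_combination (2*h') * hbez + key2
    have hz' : R z := by
      simp only [hR]
      exact ⟨hz, trivial⟩
    have hfin := latC (-h' * Y0) (z + 2*B*(-h' * X0)) (latB (-h' * X0) z hz')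
    rw [show z + 2*B*(-h' * X0) + 2*C*(-h' * Y0) = z + (C - B) from by
      linear_combination hsum] at hfin
    simp only [hR] at hfin
    have hcol := hfin.2
    rw [show z + (C - B) + B = z + C by ring] at hcol
    exact pBC hcol.symm
  intro x
  have h := key (x + A)
  rw [show x + A + A = x + 2*A by ring, show x + A - A = x by ring] at h
  exact h
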